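/- arXiv:1608.01239 — 2 statements merged into one kernel-verified Lean document; each statement's English description precedes it below -/
import Mathlib

section
/- Let $\Lambda$ be a finite dimensional Auslander algebra and $I$ an indecomposable injective right $\Lambda$-module. Then $I$ is projective if and only if the projective dimension of its socle is at most 1. -/
universe u

open CategoryTheory

section Defs

variable (R : Type u) [Ring R]

/-- `pdLE R n M` : the module `M` has projective dimension at most `n`. -/
def pdLE : ℕ → ModuleCat.{u} R → Prop
  | 0, M => Module.Projective R M
  | (n+1), M => ∃ (P : ModuleCat.{u} R) (f : P →ₗ[R] M),
      Module.Projective R P ∧ Function.Surjective f ∧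
      pdLE n (ModuleCat.of R (LinearMap.ker f))

/-- The projective dimension of a module, as an element of `ℕ∞` (`⊤` if no
finite projective resolution exists). -/
noncomputable def projDim (M : ModuleCat.{u} R) : ℕ∞ :=
  sInf ((↑) '' {n : ℕ | pdLE R n M})

/-- `idLE R n M` : the module `M` has injective dimension at most `n`. -/
def idLE : ℕ → ModuleCat.{u} R → Prop
  | 0, M => Module.Injective R M
  | (n+1), M => ∃ (I : ModuleCat.{u} R) (f : M →ₗ[R] I),
      Module.Injective R I ∧ Function.Injective f ∧
      idLE n (ModuleCat.of R (I ⧸ LinearMap.range f))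

/-- The injective dimension of a module, as an element of `ℕ∞`. -/
noncomputable def injDim (M : ModuleCat.{u} R) : ℕ∞ :=
  sInf ((↑) '' {n : ℕ | idLE R n M})

/-- The global dimension (computed on finitely generated modules) is at most `n`. -/
def gldimLE (n : ℕ) : Prop :=
  ∀ M : ModuleCat.{u} R, Module.Finite R M → pdLE R n M

/-- The global dimension of `R`, computed on finitely generated modules. -/
noncomputable def globalDim : ℕ∞ :=
  sInf ((↑) '' {n : ℕ | gldimLE R n})

/-- The socle of a module: the sum of all its simple submodules. -/
def socle (M : Type u) [AddCommGroup M] [Module R M] : Submodule R M :=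
  sSup {S : Submodule R M | IsSimpleModule R S}

/-- An algebra is an Auslander algebra if its global dimension is at most `2` and
its dominant dimension is at least `2`, i.e. there is an exact sequence
`0 → R → I₀ → I₁` with `I₀`, `I₁` both projective and injective. -/
def IsAuslander : Prop :=
  gldimLE R 2 ∧
  ∃ (I₀ I₁ : ModuleCat.{u} R) (f : R →ₗ[R] I₀) (g : I₀ →ₗ[R] I₁),
    Module.Injective R I₀ ∧ Module.Projective R I₀ ∧
    Module.Injective R I₁ ∧ Module.Projective R I₁ ∧
    Function.Injective f ∧ LinearMap.ker g = LinearMap.range f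

/-- `f : M →ₗ[R] I` realizes `I` as an injective envelope of `M`: `I` is injective
and `f` is an essential embedding. -/
def IsInjectiveEnvelope {M I : Type u} [AddCommGroup M] [Module R M]
    [AddCommGroup I] [Module R I] (f : M →ₗ[R] I) : Prop :=
  Module.Injective R I ∧ Function.Injective f ∧
    ∀ N : Submodule R I, N ≠ ⊥ → N ⊓ LinearMap.range f ≠ ⊥

end Defs


open Function

section Helpers

variable {R : Type u} [Ring R]

/-- A submodule `p.prod ⊥` is isomorphic to `p`. -/
noncomputable def prodBotEquiv {M N : Type u} [AddCommGroup M] [AddCommGroup N]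
    [Module R M] [Module R N] (p : Submodule R M) :
    ↥(p.prod (⊥ : Submodule R N)) ≃ₗ[R] ↥p := by
  refine LinearEquiv.ofLinear
    (LinearMap.codRestrict p ((LinearMap.fst R M N).comp (Submodule.subtype _))
      (fun x => x.2.1))
    (LinearMap.codRestrict (p.prod ⊥) ((LinearMap.inl R M N).comp p.subtype)
      (fun x => ⟨x.2, by simp⟩)) ?_ ?_
  · ext x; rfl
  · ext x
    · rfl
    · exact ((Submodule.mem_bot R).mp x.2.2).symm

/-- Splitting: if `f : M →ₗ N` has a right inverse `s`, then `M ≃ ker f × N`. -/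
noncomputable def splitEquiv {M N : Type u} [AddCommGroup M] [AddCommGroup N]
    [Module R M] [Module R N] (f : M →ₗ[R] N) (s : N →ₗ[R] M)
    (hs : f ∘ₗ s = LinearMap.id) : M ≃ₗ[R] ↥(LinearMap.ker f) × N := by
  have hfs : ∀ n, f (s n) = n := fun n => congrArg (fun g => g n) (congrArg DFunLike.coe hs)
  refine LinearEquiv.ofLinear
    (LinearMap.prod
      (LinearMap.codRestrict (LinearMap.ker f) (LinearMap.id - s ∘ₗ f)
        (fun x => by simp [LinearMap.mem_ker, hfs]))
      f)
    (LinearMap.coprod (LinearMap.ker f).subtype s) ?_ ?_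
  · ext x
    · simp
    · simp [LinearMap.mem_ker.mp x.2]
    · simp [hfs]
    · simp [hfs]
  · ext x
    simp

end Helpers

section Schanuel

variable {R : Type u} [Ring R]

/-- One half of Schanuel's lemma: the pullback module is isomorphic to `ker f × B`. -/
noncomputable def schanuelAux {A B M : Type u} [AddCommGroup A] [AddCommGroup B]
    [AddCommGroup M] [Module R A] [Module R B] [Module R M]
    (f : A →ₗ[R] M) (g : B →ₗ[R] M) (hf : Surjective f) (hB : Module.Projective R B) :
    (↥(LinearMap.ker f) × B) ≃ₗ[R]
      ↥(LinearMap.ker ((f ∘ₗ LinearMap.fst R A B) - (g ∘ₗ LinearMap.snd R A B))) := by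
  set h := (f ∘ₗ LinearMap.fst R A B) - (g ∘ₗ LinearMap.snd R A B) with hh
  set X := LinearMap.ker h with hX
  have hmem : ∀ p : A × B, p ∈ X ↔ f p.1 = g p.2 := by
    intro p
    simp [hX, hh, LinearMap.mem_ker, sub_eq_zero]
  let p₂ : ↥X →ₗ[R] B := (LinearMap.snd R A B) ∘ₗ X.subtype
  have hp₂ : Surjective p₂ := by
    intro b
    obtain ⟨a, ha⟩ := hf (g b)
    exact ⟨⟨(a, b), (hmem (a, b)).mpr ha⟩, rfl⟩
  have hsec := Module.projective_lifting_property (h := hB) p₂ LinearMap.id hp₂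
  set s := Classical.choose hsec with hsdef
  have hs : p₂ ∘ₗ s = LinearMap.id := Classical.choose_spec hsec
  have hker : LinearMap.ker p₂ =
      Submodule.comap X.subtype ((LinearMap.ker f).prod (⊥ : Submodule R B)) := by
    ext ⟨⟨a, b⟩, hab⟩
    constructor
    · intro hb
      have hb' : b = 0 := hb
      have : f a = g b := (hmem (a, b)).mp hab
      refine ⟨?_, by simpa using hb'⟩
      simpa [LinearMap.mem_ker, hb'] using this
    · intro hb
      exact (Submodule.mem_bot R).mp hb.2
  have hle : (LinearMap.ker f).prod (⊥ : Submodule R B) ≤ X := by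
    rintro ⟨a, b⟩ ⟨ha, hb⟩
    have hb' : b = 0 := (Submodule.mem_bot R).mp hb
    rw [hmem]
    simp [LinearMap.mem_ker.mp ha, hb']
  have ekp : ↥(LinearMap.ker p₂) ≃ₗ[R] ↥(LinearMap.ker f) :=
    LinearEquiv.trans (LinearEquiv.trans (LinearEquiv.ofEq _ _ hker)
      (Submodule.comapSubtypeEquivOfLe hle)) (prodBotEquiv _)
  have esp : ↥X ≃ₗ[R] (↥(LinearMap.ker p₂) × B) := splitEquiv p₂ s hs
  exact LinearEquiv.trans (LinearEquiv.prodCongr (LinearEquiv.symm ekp) (LinearEquiv.refl R B))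
    (LinearEquiv.symm esp)

/-- Schanuel's lemma. -/
theorem schanuel {A B M : Type u} [AddCommGroup A] [AddCommGroup B]
    [AddCommGroup M] [Module R A] [Module R B] [Module R M]
    (f : A →ₗ[R] M) (g : B →ₗ[R] M) (hf : Surjective f) (hg : Surjective g)
    (hA : Module.Projective R A) (hB : Module.Projective R B) :
    Nonempty ((↥(LinearMap.ker f) × B) ≃ₗ[R] ↥(LinearMap.ker g) × A) := by
  set h := (f ∘ₗ LinearMap.fst R A B) - (g ∘ₗ LinearMap.snd R A B) with hh
  set h' := (g ∘ₗ LinearMap.fst R B A) - (f ∘ₗ LinearMap.snd R B A) with hh'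
  have e1 : (↥(LinearMap.ker f) × B) ≃ₗ[R] ↥(LinearMap.ker h) := schanuelAux f g hf hB
  have e2 : (↥(LinearMap.ker g) × A) ≃ₗ[R] ↥(LinearMap.ker h') := schanuelAux g f hg hA
  suffices emid : ↥(LinearMap.ker h) ≃ₗ[R] ↥(LinearMap.ker h') by
    exact ⟨LinearEquiv.trans e1 (LinearEquiv.trans emid (LinearEquiv.symm e2))⟩
  have hker_eq : ∀ (a : A) (b : B), h (a, b) = f a - g b := fun a b => rfl
  have hker_eq' : ∀ (b : B) (a : A), h' (b, a) = g b - f a := fun b a => rfl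
  have hmap : (LinearMap.ker h).map
      ((LinearEquiv.prodComm R A B : A × B →ₛₗ[RingHom.id R] B × A)) = LinearMap.ker h' := by
    ext x
    rcases x with ⟨b, a⟩
    simp only [Submodule.mem_map]
    constructor
    · rintro ⟨⟨a', b'⟩, hab, heq⟩
      have heq' : (b', a') = (b, a) := heq
      rw [Prod.ext_iff] at heq'
      obtain ⟨h1, h2⟩ := heq'
      simp only at h1 h2
      subst h1; subst h2
      have hz : f a' - g b' = 0 := hab
      rw [LinearMap.mem_ker, hker_eq', ← neg_sub, hz, neg_zero]
    · intro hab
      refine ⟨(a, b), ?_, rfl⟩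
      have hz : g b - f a = 0 := hab
      rw [LinearMap.mem_ker, hker_eq, ← neg_sub, hz, neg_zero]
  exact LinearEquiv.trans ((LinearEquiv.prodComm R A B).submoduleMap (LinearMap.ker h))
    (LinearEquiv.ofEq _ _ hmap)

end Schanuel
section PdLEHelpers

variable {R : Type u} [Ring R]

theorem projective_fst {A N : Type u} [AddCommGroup A] [AddCommGroup N]
    [Module R A] [Module R N] (h : Module.Projective R (A × N)) :
    Module.Projective R A := by
  haveI := h
  exact Module.Projective.of_split (LinearMap.inl R A N) (LinearMap.fst R A N) (by ext x; rfl)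

theorem pdLE_one_intro {A : Type u} [AddCommGroup A] [Module R A]
    {P : Type u} [AddCommGroup P] [Module R P] (f : P →ₗ[R] A)
    (hP : Module.Projective R P) (hsurj : Function.Surjective f)
    (hker : Module.Projective R ↥(LinearMap.ker f)) :
    pdLE R 1 (ModuleCat.of R A) :=
  ⟨ModuleCat.of R P, f, hP, hsurj, hker⟩

theorem pdLE_one_elim {A : Type u} [AddCommGroup A] [Module R A]
    (h : pdLE R 1 (ModuleCat.of R A)) :
    ∃ (P : Type u) (_ : AddCommGroup P) (_ : Module R P) (f : P →ₗ[R] A),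
      Module.Projective R P ∧ Function.Surjective f ∧
        Module.Projective R ↥(LinearMap.ker f) := by
  obtain ⟨P, f, hP, hsurj, hker⟩ := h
  exact ⟨P, inferInstance, inferInstance, f, hP, hsurj, hker⟩

theorem pdLE_two_elim {A : Type u} [AddCommGroup A] [Module R A]
    (h : pdLE R 2 (ModuleCat.of R A)) :
    ∃ (P : Type u) (_ : AddCommGroup P) (_ : Module R P) (f : P →ₗ[R] A),
      Module.Projective R P ∧ Function.Surjective f ∧
        pdLE R 1 (ModuleCat.of R ↥(LinearMap.ker f)) := by
  obtain ⟨P, f, hP, hsurj, hker⟩ := h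
  exact ⟨P, inferInstance, inferInstance, f, hP, hsurj, hker⟩

end PdLEHelpers
section Uniform

variable {R : Type u} [Ring R] {I : Type u} [AddCommGroup I] [Module R I]

/-- An indecomposable injective module is uniform: any two nonzero submodules intersect
nontrivially. -/
theorem uniform_of_indecomposable (hInj : Module.Injective R I)
    (hindec : ∀ N N' : Submodule R I, IsCompl N N' → N = ⊥ ∨ N' = ⊥)
    {N : Submodule R I} (hN : N ≠ ⊥) {Y : Submodule R I} (hY : Y ≠ ⊥) :
    N ⊓ Y ≠ ⊥ := by
  classical
  set ess : Submodule R I → Prop :=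
    fun X => N ≤ X ∧ ∀ x ∈ X, x ≠ (0 : I) → ∃ c : R, c • x ∈ N ∧ c • x ≠ 0 with hess
  -- Zorn 1 : maximal essential extension E of N
  obtain ⟨E, hNE, hEmax⟩ := zorn_le_nonempty₀ (setOf ess)
    (by
      intro c hcs hchain y hy
      refine ⟨sSup c, ⟨le_trans (hcs hy).1 (le_sSup hy), ?_⟩, fun z hz => le_sSup hz⟩
      intro x hx hx0
      obtain ⟨X, hXc, hxX⟩ := (Submodule.mem_sSup_of_directed ⟨y, hy⟩
        (hchain.directedOn)).mp hx
      exact (hcs hXc).2 x hxX hx0)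
    N ⟨le_rfl, fun x hx hx0 => ⟨1, by simpa using hx, by simpa using hx0⟩⟩
  have hEess : ess E := hEmax.1
  -- Zorn 2 : maximal C with E ⊓ C = ⊥
  obtain ⟨C, _, hCmax⟩ := zorn_le_nonempty₀ {C : Submodule R I | E ⊓ C = ⊥}
    (by
      intro c hcs hchain y hy
      refine ⟨sSup c, ?_, fun z hz => le_sSup hz⟩
      rw [Set.mem_setOf_eq, eq_bot_iff]
      rintro x ⟨hxE, hxS⟩
      obtain ⟨X, hXc, hxX⟩ := (Submodule.mem_sSup_of_directed ⟨y, hy⟩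
        (hchain.directedOn)).mp hxS
      have := hcs hXc
      rw [Set.mem_setOf_eq] at this
      rw [Submodule.mem_bot]
      have : x ∈ E ⊓ X := ⟨hxE, hxX⟩
      rw [hcs hXc] at this
      simpa using this)
    ⊥ (by simp)
  have hEC : E ⊓ C = ⊥ := hCmax.1
  -- extend the projection onto E to an endomorphism h of I
  set φ : (↥E × ↥C) →ₗ[R] I := LinearMap.coprod E.subtype C.subtype with hφ
  have hφinj : Function.Injective φ := by
    rw [← LinearMap.ker_eq_bot]
    rw [eq_bot_iff]
    rintro ⟨e, c⟩ hec
    have h1 : (e : I) + c = 0 := hec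
    have he' : (e : I) = -(c : I) := eq_neg_of_add_eq_zero_left h1
    have heEC : (e : I) ∈ E ⊓ C := ⟨e.2, by rw [he']; exact neg_mem c.2⟩
    rw [hEC, Submodule.mem_bot] at heEC
    have hc0 : (c : I) = 0 := by rw [heEC] at h1; simpa using h1
    simp only [Submodule.mem_bot, Prod.ext_iff]
    exact ⟨Subtype.ext heEC, Subtype.ext hc0⟩
  obtain ⟨h, hcomp⟩ := hInj.out φ hφinj (E.subtype ∘ₗ LinearMap.fst R ↥E ↥C)
  have hE : ∀ e : I, e ∈ E → h e = e := by
    intro e he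
    have := hcomp (⟨e, he⟩, 0)
    simpa [hφ, LinearMap.coprod_apply] using this
  have hC : ∀ c : I, c ∈ C → h c = 0 := by
    intro c hc
    have := hcomp (0, ⟨c, hc⟩)
    simpa [hφ, LinearMap.coprod_apply] using this
  have hker : ∀ x : I, h x = 0 → x ∈ C := by
    intro x hx
    have hKs : E ⊓ LinearMap.ker h = ⊥ := by
      rw [eq_bot_iff]
      rintro z ⟨hzE, hzK⟩
      rw [Submodule.mem_bot]
      rw [← hE z hzE]
      exact hzK
    have hCK : C ≤ LinearMap.ker h := fun c hc => LinearMap.mem_ker.mpr (hC c hc)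
    exact hCmax.2 hKs hCK hx
  have hrangeN : ∀ x : I, h x ≠ 0 → ∃ c : R, c • (h x) ∈ N ∧ c • (h x) ≠ 0 := by
    intro x hx
    have hxC : x ∉ C := fun hxC => hx (hC x hxC)
    have hstep : ∃ r : R, r • x ∈ E ⊔ C ∧ r • x ∉ C := by
      by_contra hcon
      push_neg at hcon
      have hC' : E ⊓ ((R ∙ x) ⊔ C) = ⊥ := by
        rw [eq_bot_iff]
        rintro z ⟨hzE, hzC'⟩
        obtain ⟨a, ha, cc, hcc, rfl⟩ := Submodule.mem_sup.mp hzC'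
        obtain ⟨r, rfl⟩ := Submodule.mem_span_singleton.mp ha
        have hrx : r • x ∈ E ⊔ C := by
          have : r • x = (r • x + cc) - cc := by abel
          rw [this]
          exact sub_mem (Submodule.mem_sup_left hzE) (Submodule.mem_sup_right hcc)
        have hrxC : r • x ∈ C := hcon r hrx
        have : r • x + cc ∈ E ⊓ C := ⟨hzE, add_mem hrxC hcc⟩
        rw [hEC] at this
        simpa using this
      have hCle : (R ∙ x) ⊔ C ≤ C := hCmax.2 hC' le_sup_right
      exact hxC (hCle (Submodule.mem_sup_left (Submodule.mem_span_singleton_self x)))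
    obtain ⟨r, hrmem, hrC⟩ := hstep
    obtain ⟨e, he, cc, hcc, heq⟩ := Submodule.mem_sup.mp hrmem
    have he0 : e ≠ 0 := by
      rintro rfl
      exact hrC (by rw [← heq, zero_add]; exact hcc)
    obtain ⟨c', hc'N, hc'ne⟩ := hEess.2 e he he0
    have hhrx : h (r • x) = e := by
      rw [← heq, map_add, hE e he, hC cc hcc, add_zero]
    have hr : r • h x = e := by rw [← map_smul, hhrx]
    refine ⟨c' * r, ?_, ?_⟩
    · rw [mul_smul, hr]; exact hc'N
    · rw [mul_smul, hr]; exact hc'ne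
  have hrangeE : ∀ x : I, h x ∈ E := by
    intro x
    by_contra hxE
    have hE' : ess (E ⊔ (R ∙ h x)) := by
      refine ⟨le_trans hEess.1 le_sup_left, ?_⟩
      intro y hy hy0
      obtain ⟨e, he, a, ha, rfl⟩ := Submodule.mem_sup.mp hy
      obtain ⟨r, rfl⟩ := Submodule.mem_span_singleton.mp ha
      have hy' : e + r • h x = h ((e : I) + r • x) := by
        rw [map_add, hE e he, map_smul]
      rw [hy'] at hy0 ⊢
      exact hrangeN _ hy0
    have : E ⊔ (R ∙ h x) ≤ E := hEmax.2 hE' le_sup_left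
    exact hxE (this (Submodule.mem_sup_right (Submodule.mem_span_singleton_self _)))
  have htop : E ⊔ C = ⊤ := by
    rw [eq_top_iff]
    intro x _
    have hx1 : x - h x ∈ C := by
      apply hker
      rw [map_sub, hE (h x) (hrangeE x), sub_self]
    have : x = h x + (x - h x) := by abel
    rw [this]
    exact Submodule.add_mem_sup (hrangeE x) hx1
  have hcompl : IsCompl E C := ⟨disjoint_iff.mpr hEC, codisjoint_iff.mpr htop⟩
  rcases hindec E C hcompl with hEbot | hCbot
  · exact absurd (eq_bot_iff.mpr (hEbot ▸ hEess.1 : N ≤ ⊥)) hN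
  · have hEtop : E = ⊤ := by rw [hCbot, sup_bot_eq] at htop; exact htop
    obtain ⟨y, hyY, hy0⟩ := (Submodule.ne_bot_iff Y).mp hY
    obtain ⟨c, hcN, hcne⟩ := hEess.2 y (hEtop ▸ Submodule.mem_top) hy0
    exact (Submodule.ne_bot_iff (N ⊓ Y)).mpr ⟨c • y, ⟨hcN, Submodule.smul_mem Y c hyY⟩, hcne⟩

end Uniform
section MoreHelpers

variable {R : Type u} [Ring R]

theorem injective_pi {ι : Type} {Q : Type u} [AddCommGroup Q] [Module R Q]
    (hQ : Module.Injective R Q) : Module.Injective R (ι → Q) := by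
  constructor
  intro X Y _ _ _ _ f hf g
  have H : ∀ i : ι, ∃ h : Y →ₗ[R] Q, ∀ x, h (f x) = (LinearMap.proj i ∘ₗ g) x :=
    fun i => hQ.out f hf (LinearMap.proj i ∘ₗ g)
  choose hs hhs using H
  refine ⟨LinearMap.pi hs, fun x => ?_⟩
  ext i
  exact hhs i x

theorem hom_vanish_of_projective {S : Type u} [AddCommGroup S] [Module R S]
    (hS : ∀ w : S →ₗ[R] R, w = 0) {Q : Type u} [AddCommGroup Q] [Module R Q]
    (hQ : Module.Projective R Q) (g : S →ₗ[R] Q) : g = 0 := by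
  obtain ⟨s, hs⟩ := Module.projective_def.mp hQ
  by_contra hg
  obtain ⟨x, hx⟩ : ∃ x, g x ≠ 0 := by
    by_contra hA
    push_neg at hA
    exact hg (LinearMap.ext hA)
  have hsx : s (g x) ≠ 0 := by
    intro h0
    apply hx
    have h1 := hs (g x)
    rw [h0] at h1
    simpa using h1.symm
  obtain ⟨i, hi⟩ : ∃ i, s (g x) i ≠ 0 := by
    by_contra hA
    push_neg at hA
    exact hsx (Finsupp.ext hA)
  have h2 := hS ((Finsupp.lapply i) ∘ₗ s ∘ₗ g)
  have h3 := congrArg (fun w => w x) h2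
  simp only [LinearMap.comp_apply, Finsupp.lapply_apply, LinearMap.zero_apply] at h3
  exact hi h3

theorem pdLE_one_congr {A B : Type u} [AddCommGroup A] [AddCommGroup B]
    [Module R A] [Module R B] (e : A ≃ₗ[R] B) (h : pdLE R 1 (ModuleCat.of R A)) :
    pdLE R 1 (ModuleCat.of R B) := by
  obtain ⟨P, _, _, f, hP, hsurj, hker⟩ := pdLE_one_elim h
  have hker' : LinearMap.ker (e.toLinearMap ∘ₗ f) = LinearMap.ker f := by
    ext x
    simp [LinearMap.mem_ker]
  refine pdLE_one_intro (e.toLinearMap ∘ₗ f) hP ?_ ?_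
  · intro b
    obtain ⟨p, hp⟩ := hsurj (e.symm b)
    exact ⟨p, by simp [hp]⟩
  · rw [hker']
    exact hker

theorem pdLE_one_prod {A N : Type u} [AddCommGroup A] [AddCommGroup N]
    [Module R A] [Module R N] (h : pdLE R 1 (ModuleCat.of R A))
    (hN : Module.Projective R N) : pdLE R 1 (ModuleCat.of R (A × N)) := by
  obtain ⟨P, _, _, f, hP, hsurj, hker⟩ := pdLE_one_elim h
  haveI := hP; haveI := hN; haveI := hker
  refine pdLE_one_intro (f.prodMap (LinearMap.id : N →ₗ[R] N)) inferInstance ?_ ?_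
  · rintro ⟨a, n⟩
    obtain ⟨p, hp⟩ := hsurj a
    exact ⟨(p, n), by simp [hp]⟩
  · rw [LinearMap.ker_prodMap, LinearMap.ker_id]
    exact Module.Projective.of_equiv (prodBotEquiv (LinearMap.ker f)).symm

theorem pdLE_one_of_prod {A N : Type u} [AddCommGroup A] [AddCommGroup N]
    [Module R A] [Module R N] (h : pdLE R 1 (ModuleCat.of R (A × N)))
    (hN : Module.Projective R N) : pdLE R 1 (ModuleCat.of R A) := by
  obtain ⟨T, _, _, t, hT, htsurj, hker⟩ := pdLE_one_elim h
  haveI := hN; haveI := hker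
  set t₁ : T →ₗ[R] A := (LinearMap.fst R A N) ∘ₗ t with ht₁
  have hsurj₁ : Function.Surjective t₁ := by
    intro a
    obtain ⟨x, hx⟩ := htsurj (a, 0)
    exact ⟨x, by simp [ht₁, hx]⟩
  set β : ↥(LinearMap.ker t₁) →ₗ[R] N :=
    (LinearMap.snd R A N) ∘ₗ t ∘ₗ (LinearMap.ker t₁).subtype with hβ
  have hβsurj : Function.Surjective β := by
    intro n
    obtain ⟨x, hx⟩ := htsurj (0, n)
    have hx1 : x ∈ LinearMap.ker t₁ := by
      simp [ht₁, LinearMap.mem_ker, hx]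
    exact ⟨⟨x, hx1⟩, by simp [hβ, hx]⟩
  have hle : LinearMap.ker t ≤ LinearMap.ker t₁ := by
    intro x hx
    simp [ht₁, LinearMap.mem_ker, LinearMap.mem_ker.mp hx]
  have hkerβ : LinearMap.ker β =
      Submodule.comap (LinearMap.ker t₁).subtype (LinearMap.ker t) := by
    ext ⟨x, hx⟩
    have hx' : (t x).1 = 0 := hx
    simp only [hβ, LinearMap.mem_ker, Submodule.mem_comap, LinearMap.comp_apply,
      Submodule.subtype_apply]
    constructor
    · intro h2
      exact Prod.ext hx' h2
    · intro h2
      rw [h2]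
      rfl
  have hprojβ : Module.Projective R ↥(LinearMap.ker β) :=
    Module.Projective.of_equiv (LinearEquiv.trans (LinearEquiv.ofEq _ _ hkerβ)
      (Submodule.comapSubtypeEquivOfLe hle)).symm
  obtain ⟨s, hs⟩ := Module.projective_lifting_property (h := hN) β LinearMap.id hβsurj
  haveI := hprojβ
  exact pdLE_one_intro t₁ hT hsurj₁
    (Module.Projective.of_equiv (splitEquiv β s hs).symm)

end MoreHelpers
section Socle

variable {R : Type u} [Ring R]

theorem socle_eq_of_simple {I : Type u} [AddCommGroup I] [Module R I]
    {T : Submodule R I} (hT : IsSimpleModule R ↥T)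
    (huniq : ∀ T' : Submodule R I, IsSimpleModule R ↥T' → T' = T) :
    socle R I = T := by
  unfold socle
  have : {S : Submodule R I | IsSimpleModule R ↥S} = {T} := by
    apply Set.eq_singleton_iff_unique_mem.mpr
    exact ⟨hT, huniq⟩
  rw [this, sSup_singleton]

theorem socle_simple_essential [IsArtinianRing R] {I : Type u} [AddCommGroup I]
    [Module R I] [Nontrivial I] (hInj : Module.Injective R I)
    (hindec : ∀ N N' : Submodule R I, IsCompl N N' → N = ⊥ ∨ N' = ⊥) :
    IsSimpleModule R ↥(socle R I) ∧ ∀ Y : Submodule R I, Y ≠ ⊥ → socle R I ≤ Y := by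
  classical
  -- there exists a simple submodule
  obtain ⟨x, hx⟩ := exists_ne (0 : I)
  set N : Submodule R I := R ∙ x with hNdef
  haveI hart : IsArtinian R ↥N := isArtinian_of_fg_of_artinian N (Submodule.fg_span_singleton x)
  haveI : IsAtomic (Submodule R ↥N) := isAtomic_of_orderBot_wellFounded_lt wellFounded_lt
  have hxN : x ∈ N := Submodule.mem_span_singleton_self x
  have hNtriv : (⊤ : Submodule R ↥N) ≠ ⊥ := by
    intro hbot
    have : (⟨x, hxN⟩ : ↥N) ∈ (⊤ : Submodule R ↥N) := Submodule.mem_top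
    rw [hbot, Submodule.mem_bot] at this
    exact hx (congrArg Subtype.val this)
  obtain ⟨A, hA, _⟩ := (IsAtomic.eq_bot_or_exists_atom_le (⊤ : Submodule R ↥N)).resolve_left hNtriv
  have hAsimple : IsSimpleModule R ↥A := isSimpleModule_iff_isAtom.mpr hA
  set T : Submodule R I := A.map N.subtype with hTdef
  have hTsimple : IsSimpleModule R ↥T := by
    haveI := hAsimple
    exact IsSimpleModule.congr (Submodule.equivMapOfInjective N.subtype
      (Submodule.injective_subtype N) A).symm
  -- uniqueness of the simple submodule
  have hTatom : IsAtom T := isSimpleModule_iff_isAtom.mp hTsimple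
  have huniq : ∀ T' : Submodule R I, IsSimpleModule R ↥T' → T' = T := by
    intro T' hT'
    have hT'atom : IsAtom T' := isSimpleModule_iff_isAtom.mp hT'
    have hint : T' ⊓ T ≠ ⊥ := uniform_of_indecomposable hInj hindec hT'atom.1 hTatom.1
    have h1 : T' ⊓ T = T' := by
      rcases lt_or_eq_of_le (inf_le_left : T' ⊓ T ≤ T') with hlt | heq
      · exact absurd (hT'atom.2 _ hlt) hint
      · exact heq
    have h2 : T' ⊓ T = T := by
      rcases lt_or_eq_of_le (inf_le_right : T' ⊓ T ≤ T) with hlt | heq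
      · exact absurd (hTatom.2 _ hlt) hint
      · exact heq
    rw [← h1, h2]
  have hsoc : socle R I = T := socle_eq_of_simple hTsimple huniq
  constructor
  · rw [hsoc]; exact hTsimple
  · intro Y hY
    rw [hsoc]
    have hint : T ⊓ Y ≠ ⊥ := uniform_of_indecomposable hInj hindec hTatom.1 hY
    have h1 : T ⊓ Y = T := by
      rcases lt_or_eq_of_le (inf_le_left : T ⊓ Y ≤ T) with hlt | heq
      · exact absurd (hTatom.2 _ hlt) hint
      · exact heq
    rw [← h1]
    exact inf_le_right

end Socle
/-- Over a finite dimensional Auslander algebra, an indecomposable injective module is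
projective iff the projective dimension of its socle is at most `1`. -/
theorem stmt_8 (k Λ : Type u) [Field k] [Ring Λ] [Algebra k Λ] [FiniteDimensional k Λ]
    (hΛ : IsAuslander Λ)
    (I : Type u) [AddCommGroup I] [Module Λ I]
    (hInj : Module.Injective Λ I) (hne : Nontrivial I)
    (hindec : ∀ N N' : Submodule Λ I, IsCompl N N' → N = ⊥ ∨ N' = ⊥) :
    Module.Projective Λ I ↔ pdLE Λ 1 (ModuleCat.of Λ ↥(socle Λ I)) := by
  classical
  obtain ⟨hgl, I₀, I₁, f, g, hI₀inj, hI₀proj, hI₁inj, hI₁proj, hf, hgf⟩ := hΛ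
  haveI : IsArtinianRing Λ := IsArtinianRing.of_finite k Λ
  haveI : IsNoetherian Λ Λ := isNoetherian_of_tower k inferInstance
  obtain ⟨hS₀simple, hess⟩ := socle_simple_essential (R := Λ) (I := I) hInj hindec
  haveI := hS₀simple
  haveI : Nontrivial ↥(socle Λ I) := IsSimpleModule.nontrivial Λ ↥(socle Λ I)
  obtain ⟨x₀, hx₀⟩ := exists_ne (0 : ↥(socle Λ I))
  constructor
  · -- projective → pd(socle) ≤ 1
    intro hP
    -- a nonzero homomorphism from the socle to Λ
    obtain ⟨s, hs⟩ := Module.projective_def.mp hP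
    have hsx : s ((x₀ : I)) ≠ 0 := by
      intro h0
      have h1 := hs ((x₀ : I))
      rw [h0] at h1
      simp only [map_zero] at h1
      exact hx₀ (Subtype.ext h1.symm)
    obtain ⟨i, hi⟩ : ∃ i, s ((x₀ : I)) i ≠ 0 := by
      by_contra hA
      push_neg at hA
      exact hsx (Finsupp.ext hA)
    set u : ↥(socle Λ I) →ₗ[Λ] Λ :=
      (Finsupp.lapply i) ∘ₗ s ∘ₗ (socle Λ I).subtype with hudef
    have hu : u x₀ ≠ 0 := by
      simpa [hudef] using hi
    have huinj : Function.Injective u := by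
      rw [← LinearMap.ker_eq_bot]
      rcases eq_bot_or_eq_top (LinearMap.ker u) with hbot | htop
      · exact hbot
      · exfalso
        apply hu
        have : x₀ ∈ LinearMap.ker u := htop ▸ Submodule.mem_top
        exact this
    set S' : Submodule Λ Λ := LinearMap.range u with hS'def
    have eS : ↥(socle Λ I) ≃ₗ[Λ] ↥S' := LinearEquiv.ofInjective u huinj
    haveI hfinQ : Module.Finite Λ (Λ ⧸ S') :=
      Module.Finite.of_surjective S'.mkQ (Submodule.mkQ_surjective S')
    have hpd2 := hgl (ModuleCat.of Λ (Λ ⧸ S')) hfinQ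
    obtain ⟨Q, _, _, q, hQproj, hqsurj, hpd1⟩ := pdLE_two_elim hpd2
    obtain ⟨Φ⟩ := schanuel S'.mkQ q (Submodule.mkQ_surjective S') hqsurj
      inferInstance hQproj
    have h1 : pdLE Λ 1 (ModuleCat.of Λ (↥(LinearMap.ker q) × Λ)) :=
      pdLE_one_prod hpd1 inferInstance
    have e2 : (↥(LinearMap.ker q) × Λ) ≃ₗ[Λ] (↥S' × Q) :=
      LinearEquiv.trans Φ.symm
        (LinearEquiv.prodCongr (LinearEquiv.ofEq _ _ (Submodule.ker_mkQ S'))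
          (LinearEquiv.refl Λ Q))
    have h2 : pdLE Λ 1 (ModuleCat.of Λ (↥S' × Q)) := pdLE_one_congr e2 h1
    have h3 : pdLE Λ 1 (ModuleCat.of Λ ↥S') := pdLE_one_of_prod h2 hQproj
    exact pdLE_one_congr eS.symm h3
  · -- pd(socle) ≤ 1 → projective
    intro hpd
    have claimA : ¬ (∀ u : ↥(socle Λ I) →ₗ[Λ] ↥I₀, u = 0) := by
      intro hI₀hom
      have hHomΛ : ∀ w : ↥(socle Λ I) →ₗ[Λ] Λ, w = 0 := by
        intro w
        by_contra hw
        obtain ⟨y, hy⟩ : ∃ y, w y ≠ 0 := by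
          by_contra hA
          push_neg at hA
          exact hw (LinearMap.ext hA)
        have hfw : f ∘ₗ w ≠ 0 := by
          intro h0
          have h1 := congrArg (fun v => v y) h0
          simp only [LinearMap.comp_apply, LinearMap.zero_apply] at h1
          exact hy (hf (by simpa using h1))
        exact hfw (hI₀hom (f ∘ₗ w))
      -- the cyclic presentation of the socle
      set e : Λ →ₗ[Λ] ↥(socle Λ I) := LinearMap.toSpanSingleton Λ ↥(socle Λ I) x₀ with hedef
      have hesurj : Function.Surjective e :=
        IsSimpleModule.toSpanSingleton_surjective Λ hx₀
      -- the kernel of e is projective (Schanuel)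
      obtain ⟨P, _, _, p, hPproj, hpsurj, hkerp⟩ := pdLE_one_elim hpd
      obtain ⟨Ψ⟩ := schanuel e p hesurj hpsurj inferInstance hPproj
      have hK₀proj : Module.Projective Λ ↥(LinearMap.ker e) := by
        haveI := hkerp
        haveI : Module.Projective Λ (↥(LinearMap.ker p) × Λ) := inferInstance
        exact projective_fst (Module.Projective.of_equiv Ψ.symm)
      -- the kernel of e is finitely generated
      haveI hK₀fin : Module.Finite Λ ↥(LinearMap.ker e) :=
        Module.Finite.iff_fg.mpr (IsNoetherian.noetherian _)
      obtain ⟨n, π, hπsurj⟩ := Module.Finite.exists_fin' Λ ↥(LinearMap.ker e)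
      obtain ⟨σ, hσ⟩ := Module.projective_lifting_property (h := hK₀proj) π
        LinearMap.id hπsurj
      have hπσ : ∀ x : ↥(LinearMap.ker e), π (σ x) = x := by
        intro x
        have h1 := congrArg (fun m => m x) (congrArg DFunLike.coe hσ)
        simpa using h1
      set F2 : (Fin n → Λ) →ₗ[Λ] (Fin n → ↥I₀) :=
        LinearMap.pi (fun i0 => f ∘ₗ LinearMap.proj i0) with hF2def
      have hF2apply : ∀ v i0, F2 v i0 = f (v i0) := fun v i0 => rfl
      have hF2inj : Function.Injective F2 := by
        intro v v' hvv
        funext i0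
        exact hf (by rw [← hF2apply v i0, ← hF2apply v' i0, hvv])
      set G2 : (Fin n → ↥I₀) →ₗ[Λ] (Fin n → ↥I₁) :=
        LinearMap.pi (fun i0 => g ∘ₗ LinearMap.proj i0) with hG2def
      have hG2apply : ∀ v i0, G2 v i0 = g (v i0) := fun v i0 => rfl
      have hG2F2 : ∀ v, G2 (F2 v) = 0 := by
        intro v
        funext i0
        rw [hG2apply, hF2apply]
        have : f (v i0) ∈ LinearMap.ker g := by
          rw [hgf]
          exact LinearMap.mem_range_self f (v i0)
        exact this
      have hpiInj : Module.Injective Λ (Fin n → ↥I₀) := injective_pi hI₀inj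
      set j : ↥(LinearMap.ker e) →ₗ[Λ] (Fin n → ↥I₀) := F2 ∘ₗ σ with hjdef
      obtain ⟨ψ, hψ⟩ := hpiInj.out (LinearMap.ker e).subtype
        (Submodule.injective_subtype _) j
      -- G2 ∘ ψ vanishes since Hom(S₀, I₁) = 0
      have hwzero : ∀ a : Λ, G2 (ψ a) = 0 := by
        have hvan : ∀ i0 : Fin n, (LinearMap.proj i0) ∘ₗ G2 ∘ₗ ψ = (0 : Λ →ₗ[Λ] ↥I₁) := by
          intro i0
          set w : Λ →ₗ[Λ] ↥I₁ := (LinearMap.proj i0) ∘ₗ G2 ∘ₗ ψ with hwdef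
          have hKw : LinearMap.ker e ≤ LinearMap.ker w := by
            intro a' ha'
            have h1 : ψ a' = j ⟨a', ha'⟩ := hψ ⟨a', ha'⟩
            rw [LinearMap.mem_ker, hwdef]
            simp only [LinearMap.comp_apply]
            rw [h1, hjdef]
            simp only [LinearMap.comp_apply]
            rw [hG2F2]
            rfl
          set v : ↥(socle Λ I) →ₗ[Λ] ↥I₁ :=
            ((LinearMap.ker e).liftQ w hKw) ∘ₗ
              (e.quotKerEquivOfSurjective hesurj).symm.toLinearMap with hvdef
          have hv0 : v = 0 := hom_vanish_of_projective hHomΛ hI₁proj v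
          apply LinearMap.ext
          intro a
          have hqk : (e.quotKerEquivOfSurjective hesurj).symm (e a) =
              Submodule.Quotient.mk a := by
            rw [LinearEquiv.symm_apply_eq]
            rfl
          have h2 : v (e a) = w a := by
            rw [hvdef]
            simp only [LinearMap.comp_apply, LinearEquiv.coe_toLinearMap]
            rw [hqk, Submodule.liftQ_apply]
          rw [hv0] at h2
          simp only [LinearMap.zero_apply] at h2
          simpa using h2.symm
        intro a
        funext i0
        have := congrArg (fun m => m a) (congrArg DFunLike.coe (hvan i0))
        simpa using this
      -- ψ factors through F2
      have hrange' : ∀ a : Λ, ψ a ∈ LinearMap.range F2 := by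
        intro a
        have h1 : ∀ i0, ∃ b, f b = ψ a i0 := by
          intro i0
          have h2 : ψ a i0 ∈ LinearMap.ker g := by
            have h3 := congrArg (fun z => z i0) (hwzero a)
            simpa [hG2apply] using h3
          rw [hgf] at h2
          exact h2
        choose vv hvv using h1
        exact ⟨vv, funext fun i0 => by rw [hF2apply]; exact hvv i0⟩
      set ψr : Λ →ₗ[Λ] ↥(LinearMap.range F2) :=
        LinearMap.codRestrict (LinearMap.range F2) ψ hrange' with hψrdef
      set eF2 : (Fin n → Λ) ≃ₗ[Λ] ↥(LinearMap.range F2) :=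
        LinearEquiv.ofInjective F2 hF2inj with heF2def
      set ψ₂ : Λ →ₗ[Λ] (Fin n → Λ) := eF2.symm.toLinearMap ∘ₗ ψr with hψ₂def
      have hψ₂ : ∀ a, F2 (ψ₂ a) = ψ a := by
        intro a
        have h1 : eF2 (ψ₂ a) = ψr a := by
          rw [hψ₂def]
          simp only [LinearMap.comp_apply, LinearEquiv.coe_toLinearMap]
          exact eF2.apply_symm_apply (ψr a)
        have h2 := congrArg Subtype.val h1
        rw [heF2def] at h2
        rw [LinearEquiv.ofInjective_apply] at h2
        simpa [hψrdef] using h2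
      -- the retraction of the inclusion of ker e
      set r : Λ →ₗ[Λ] ↥(LinearMap.ker e) := π ∘ₗ ψ₂ with hrdef
      have hrι : ∀ x : ↥(LinearMap.ker e), r ((x : Λ)) = x := by
        intro x
        have h1 : F2 (ψ₂ ((x : Λ))) = ψ ((x : Λ)) := hψ₂ _
        have h2 : ψ ((x : Λ)) = F2 (σ x) := hψ x
        have h3 : ψ₂ ((x : Λ)) = σ x := hF2inj (by rw [h1, h2])
        rw [hrdef]
        simp only [LinearMap.comp_apply]
        rw [h3]
        exact hπσ x
      -- conclude : e 1 = x₀ would be 0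
      have hδker : ∀ a ∈ LinearMap.ker e,
          ((LinearMap.id : Λ →ₗ[Λ] Λ) - (LinearMap.ker e).subtype ∘ₗ r) a = 0 := by
        intro a ha
        have h1 := hrι ⟨a, ha⟩
        simp only [LinearMap.sub_apply, LinearMap.id_apply, LinearMap.comp_apply]
        rw [h1]
        simp
      set δ : (Λ ⧸ LinearMap.ker e) →ₗ[Λ] Λ :=
        (LinearMap.ker e).liftQ ((LinearMap.id : Λ →ₗ[Λ] Λ) - (LinearMap.ker e).subtype ∘ₗ r)
          (fun a ha => LinearMap.mem_ker.mpr (hδker a ha)) with hδdef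
      set gfin : ↥(socle Λ I) →ₗ[Λ] Λ :=
        δ ∘ₗ (e.quotKerEquivOfSurjective hesurj).symm.toLinearMap with hgfindef
      have hgfin0 : gfin = 0 := hHomΛ gfin
      have hqk1 : (e.quotKerEquivOfSurjective hesurj).symm (e 1) =
          Submodule.Quotient.mk 1 := by
        rw [LinearEquiv.symm_apply_eq]
        rfl
      have h1 : gfin (e 1) = 1 - ((r 1 : Λ)) := by
        rw [hgfindef]
        simp only [LinearMap.comp_apply, LinearEquiv.coe_toLinearMap]
        rw [hqk1, hδdef, Submodule.liftQ_apply]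
        simp
      rw [hgfin0] at h1
      simp only [LinearMap.zero_apply] at h1
      have h2 : (1 : Λ) = ((r 1 : Λ)) := by
        have := h1.symm
        rwa [sub_eq_zero] at this
      have h3 : (1 : Λ) ∈ LinearMap.ker e := by
        rw [h2]
        exact (r 1).2
      have h4 : e 1 = 0 := h3
      rw [hedef, LinearMap.toSpanSingleton_apply_one] at h4
      exact hx₀ h4
    push_neg at claimA
    obtain ⟨u, hu⟩ := claimA
    obtain ⟨v, hv⟩ := hI₀inj.out (socle Λ I).subtype
      (Submodule.injective_subtype _) u
    have hvinj : Function.Injective v := by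
      rw [← LinearMap.ker_eq_bot]
      by_contra hker
      apply hu
      have hle := hess (LinearMap.ker v) hker
      ext z
      have hz : (z : I) ∈ LinearMap.ker v := hle z.2
      have h1 : v ((z : I)) = 0 := hz
      have h2 := hv z
      rw [Submodule.subtype_apply] at h2
      simp only [LinearMap.zero_apply]
      rw [← h2, h1]
    obtain ⟨w, hw⟩ := hInj.out v hvinj LinearMap.id
    haveI := hI₀proj
    exact Module.Projective.of_split v w (LinearMap.ext hw)
end

section
/- Let $\Lambda$ be a finite dimensional Auslander algebra and $M$ a nonzero finitely generated right $\Lambda$-module. Then $\mathrm{pd}_\Lambda(M) = 2$ if and only if $\mathrm{pd}_\Lambda(\mathrm{soc}\,M) = 2$. -/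
universe u

open CategoryTheory

section Helpers
variable {Λ : Type u} [Ring Λ]

theorem Subsing.proj (N : Type u) [AddCommGroup N] [Module Λ N] [Subsingleton N] :
    Module.Projective Λ N := by
  refine Module.projective_def'.2 ⟨0, ?_⟩
  ext x; exact Subsingleton.elim _ _

/-- A surjection onto a projective module splits: domain ≃ ker × target,
with the second component of the equiv given by the map itself. -/
theorem splitEquiv_s10 {A B : Type u} [AddCommGroup A] [Module Λ A] [AddCommGroup B] [Module Λ B]
    (f : A →ₗ[Λ] B) (hf : Function.Surjective f) (hB : Module.Projective Λ B) :
    ∃ e : A ≃ₗ[Λ] (LinearMap.ker f × B), ∀ x, (e x).2 = f x := by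
  obtain ⟨s, hs⟩ := Module.projective_lifting_property f LinearMap.id hf
  have hs' : ∀ b, f (s b) = b := fun b => congrArg (· b) (congrArg DFunLike.coe hs)
  refine ⟨LinearEquiv.ofLinear
    (LinearMap.prod (LinearMap.codRestrict (LinearMap.ker f) (LinearMap.id - s.comp f)
        (fun x => by simp [hs' (f x)])) f)
    ((LinearMap.ker f).subtype.coprod s) ?_ ?_, fun x => rfl⟩
  · apply LinearMap.ext; rintro ⟨⟨x, hx⟩, b⟩
    rw [LinearMap.mem_ker] at hx
    refine Prod.ext (Subtype.ext ?_) ?_ <;>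
      simp [hs', hx]
  · apply LinearMap.ext; intro x
    simp [hs']

section Schanuel
variable {A B N : Type u} [AddCommGroup A] [Module Λ A] [AddCommGroup B] [Module Λ B]
  [AddCommGroup N] [Module Λ N]

/-- half of Schanuel: the pullback is `ker f × B` when `B` is projective. -/
theorem pullback_half (f : A →ₗ[Λ] N) (g : B →ₗ[Λ] N)
    (hf : Function.Surjective f) (hB : Module.Projective Λ B) :
    ∃ e : (LinearMap.ker (f.comp (LinearMap.fst Λ A B) - g.comp (LinearMap.snd Λ A B)))
        ≃ₗ[Λ] (LinearMap.ker f × B), True := by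
  set X := LinearMap.ker (f.comp (LinearMap.fst Λ A B) - g.comp (LinearMap.snd Λ A B)) with hX
  have memX : ∀ x : A × B, x ∈ X ↔ f x.1 = g x.2 := by
    intro x; simp [hX, LinearMap.mem_ker, sub_eq_zero]
  set π : X →ₗ[Λ] B := (LinearMap.snd Λ A B).comp X.subtype with hπ
  have hπs : Function.Surjective π := by
    intro b
    obtain ⟨a, ha⟩ := hf (g b)
    exact ⟨⟨(a, b), (memX _).2 ha⟩, rfl⟩
  obtain ⟨e, he⟩ := splitEquiv_s10 π hπs hB
  -- identify ker π with ker f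
  have keq : ∃ e2 : (LinearMap.ker π) ≃ₗ[Λ] LinearMap.ker f, True := by
    refine ⟨LinearEquiv.ofLinear
      (LinearMap.codRestrict _ ((LinearMap.fst Λ A B).comp (X.subtype.comp (LinearMap.ker π).subtype))
        ?_)
      (LinearMap.codRestrict _ (LinearMap.codRestrict X
          ((LinearMap.inl Λ A B).comp (LinearMap.ker f).subtype) ?_) ?_) ?_ ?_, trivial⟩
    · rintro ⟨⟨⟨a, b⟩, hab⟩, hb⟩
      have hb' : b = 0 := hb
      rw [memX] at hab
      simp only [LinearMap.mem_ker]
      simpa [hb'] using hab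
    · rintro ⟨a, ha⟩
      rw [LinearMap.mem_ker] at ha
      rw [memX]; simpa using ha
    · rintro ⟨a, ha⟩
      exact rfl
    · apply LinearMap.ext; rintro ⟨a, ha⟩
      exact Subtype.ext rfl
    · apply LinearMap.ext; rintro ⟨⟨⟨a, b⟩, hab⟩, hb⟩
      have hb' : b = 0 := hb
      exact Subtype.ext (Subtype.ext (Prod.ext rfl hb'.symm))
  obtain ⟨e2, -⟩ := keq
  exact ⟨e.trans (e2.prodCongr (LinearEquiv.refl Λ B)), trivial⟩
end Schanuel

section Schanuel2
variable {A B N : Type u} [AddCommGroup A] [Module Λ A] [AddCommGroup B] [Module Λ B]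
  [AddCommGroup N] [Module Λ N]

/-- Schanuel's lemma. -/
theorem schanuel_s10 (f : A →ₗ[Λ] N) (g : B →ₗ[Λ] N)
    (hf : Function.Surjective f) (hg : Function.Surjective g)
    (hA : Module.Projective Λ A) (hB : Module.Projective Λ B) :
    ∃ _e : (LinearMap.ker f × B) ≃ₗ[Λ] (LinearMap.ker g × A), True := by
  obtain ⟨e1, -⟩ := pullback_half f g hf hB
  obtain ⟨e2, -⟩ := pullback_half g f hg hA
  have swap : ∃ _s : (LinearMap.ker (f.comp (LinearMap.fst Λ A B) - g.comp (LinearMap.snd Λ A B)))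
      ≃ₗ[Λ] (LinearMap.ker (g.comp (LinearMap.fst Λ B A) - f.comp (LinearMap.snd Λ B A))), True := by
    have m1 : ∀ x : A × B, x ∈ (LinearMap.ker (f.comp (LinearMap.fst Λ A B) - g.comp (LinearMap.snd Λ A B))) ↔ f x.1 = g x.2 := by
      intro x; simp [LinearMap.mem_ker, sub_eq_zero]
    have m2 : ∀ x : B × A, x ∈ (LinearMap.ker (g.comp (LinearMap.fst Λ B A) - f.comp (LinearMap.snd Λ B A))) ↔ g x.1 = f x.2 := by
      intro x; simp [LinearMap.mem_ker, sub_eq_zero]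
    refine ⟨LinearEquiv.ofLinear
      (LinearMap.codRestrict _ ((LinearEquiv.prodComm Λ A B).toLinearMap.comp (Submodule.subtype _)) ?_)
      (LinearMap.codRestrict _ ((LinearEquiv.prodComm Λ B A).toLinearMap.comp (Submodule.subtype _)) ?_)
      ?_ ?_, trivial⟩
    · rintro ⟨⟨a, b⟩, hab⟩; rw [m1] at hab; rw [m2]; exact hab.symm
    · rintro ⟨⟨b, a⟩, hab⟩; rw [m2] at hab; rw [m1]; exact hab.symm
    · apply LinearMap.ext; rintro ⟨⟨b, a⟩, hab⟩; exact Subtype.ext rfl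
    · apply LinearMap.ext; rintro ⟨⟨a, b⟩, hab⟩; exact Subtype.ext rfl
  obtain ⟨s, -⟩ := swap
  exact ⟨e1.symm.trans (s.trans e2), trivial⟩
end Schanuel2

section PD1
/-- `M` has projective dimension at most 1 (unbundled). -/
def PD1 (Λ : Type u) [Ring Λ] (N : Type u) [AddCommGroup N] [Module Λ N] : Prop :=
  ∃ (P : Type u) (_ : AddCommGroup P) (_ : Module Λ P) (f : P →ₗ[Λ] N),
    Module.Projective Λ P ∧ Function.Surjective f ∧ Module.Projective Λ (LinearMap.ker f)

variable {N N' Q : Type u} [AddCommGroup N] [Module Λ N] [AddCommGroup N'] [Module Λ N']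
  [AddCommGroup Q] [Module Λ Q]

theorem PD1.of_equiv (e : N ≃ₗ[Λ] N') (h : PD1 Λ N) : PD1 Λ N' := by
  obtain ⟨P, _, _, f, hP, hs, hk⟩ := h
  refine ⟨P, _, _, e.toLinearMap.comp f, hP, e.surjective.comp hs, ?_⟩
  have : LinearMap.ker (e.toLinearMap.comp f) = LinearMap.ker f := by
    apply LinearMap.ker_comp_of_ker_eq_bot
    exact LinearMap.ker_eq_bot_of_injective e.injective
  rw [this]; exact hk

theorem PD1.of_projective (h : Module.Projective Λ N) : PD1 Λ N := by
  refine ⟨N, _, _, LinearMap.id, h, Function.surjective_id, ?_⟩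
  have : Subsingleton (LinearMap.ker (LinearMap.id : N →ₗ[Λ] N)) := by
    constructor; rintro ⟨a, ha⟩ ⟨b, hb⟩
    exact Subtype.ext ((LinearMap.mem_ker.1 ha).trans (LinearMap.mem_ker.1 hb).symm)
  exact Subsing.proj _

/-- If `PD1 N` then the kernel of *any* projective presentation of `N` is projective. -/
theorem PD1.ker_projective (h : PD1 Λ N) {F : Type u} [AddCommGroup F] [Module Λ F]
    (q : F →ₗ[Λ] N) (hq : Function.Surjective q) (hF : Module.Projective Λ F) :
    Module.Projective Λ (LinearMap.ker q) := by
  obtain ⟨P, _, _, f, hP, hs, hk⟩ := h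
  obtain ⟨e, -⟩ := schanuel_s10 q f hq hs hF hP
  haveI := hk; haveI := hP; haveI := hF
  haveI : Module.Projective Λ (LinearMap.ker f × F) := inferInstance
  haveI : Module.Projective Λ (LinearMap.ker q × P) :=
    Module.Projective.of_equiv (e.symm : (LinearMap.ker f × F) ≃ₗ[Λ] (LinearMap.ker q × P))
  exact Module.Projective.of_split (LinearMap.inl Λ (LinearMap.ker q) P)
    (LinearMap.fst Λ (LinearMap.ker q) P) rfl

theorem PD1.prod (h : PD1 Λ N) (hQ : Module.Projective Λ Q) : PD1 Λ (N × Q) := by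
  obtain ⟨P, _, _, f, hP, hs, hk⟩ := h
  haveI := hP; haveI := hQ
  refine ⟨P × Q, _, _, f.prodMap LinearMap.id, inferInstance,
    Function.Surjective.prodMap hs Function.surjective_id, ?_⟩
  -- ker (f.prodMap id) ≃ ker f
  have : ∃ _e : (LinearMap.ker (f.prodMap (LinearMap.id : Q →ₗ[Λ] Q))) ≃ₗ[Λ] LinearMap.ker f,
      True := by
    have mem : ∀ x : P × Q, x ∈ LinearMap.ker (f.prodMap (LinearMap.id : Q →ₗ[Λ] Q)) ↔
        f x.1 = 0 ∧ x.2 = 0 := by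
      intro x
      constructor
      · intro hx; exact ⟨congrArg Prod.fst (LinearMap.mem_ker.1 hx),
          congrArg Prod.snd (LinearMap.mem_ker.1 hx)⟩
      · intro ⟨h1, h2⟩; exact LinearMap.mem_ker.2 (Prod.ext h1 h2)
    refine ⟨LinearEquiv.ofLinear
      (LinearMap.codRestrict _ ((LinearMap.fst Λ P Q).comp (Submodule.subtype _)) ?_)
      (LinearMap.codRestrict _ ((LinearMap.inl Λ P Q).comp (Submodule.subtype _)) ?_) ?_ ?_,
      trivial⟩
    · rintro ⟨⟨p, q'⟩, hx⟩; exact LinearMap.mem_ker.2 ((mem _).1 hx).1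
    · rintro ⟨p, hp⟩; rw [mem]; exact ⟨LinearMap.mem_ker.1 hp, rfl⟩
    · apply LinearMap.ext; rintro ⟨p, hp⟩; exact Subtype.ext rfl
    · apply LinearMap.ext; rintro ⟨⟨p, q'⟩, hx⟩
      exact Subtype.ext (Prod.ext rfl (((mem _).1 hx).2.symm))
  obtain ⟨e, -⟩ := this
  haveI := hk
  exact Module.Projective.of_equiv e.symm

/-- `PD1` passes to direct factors with projective complement. -/
theorem PD1.of_prod (h : PD1 Λ (N × Q)) (hQ : Module.Projective Λ Q) : PD1 Λ N := by
  obtain ⟨P, _, _, f, hP, hs, hk⟩ := h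
  set f₁ : P →ₗ[Λ] N := (LinearMap.fst Λ N Q).comp f with hf₁
  have hs₁ : Function.Surjective f₁ := by
    intro n; obtain ⟨x, hx⟩ := hs (n, 0); exact ⟨x, by simp [hf₁, hx]⟩
  set D := LinearMap.ker f₁ with hD
  set π : D →ₗ[Λ] Q := (LinearMap.snd Λ N Q).comp (f.comp D.subtype) with hπ
  have hπs : Function.Surjective π := by
    intro q'
    obtain ⟨x, hx⟩ := hs (0, q')
    refine ⟨⟨x, ?_⟩, ?_⟩
    · simp only [hD, LinearMap.mem_ker, hf₁, LinearMap.coe_comp, Function.comp_apply, hx]; rfl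
    · simp [hπ, hx]
  obtain ⟨e, -⟩ := splitEquiv_s10 π hπs hQ
  -- ker π ≃ ker f
  have kk : ∃ _e2 : (LinearMap.ker π) ≃ₗ[Λ] LinearMap.ker f, True := by
    have mem : ∀ x : D, (x ∈ LinearMap.ker π ↔ f (x : P) = 0) := by
      rintro ⟨x, hx⟩
      simp only [hD, LinearMap.mem_ker, hf₁, LinearMap.coe_comp, Function.comp_apply] at hx
      constructor
      · intro hh
        have h2 : (f x).2 = 0 := hh
        exact Prod.ext hx h2
      · intro hh; show (f x).2 = 0; rw [hh]; rfl
    refine ⟨LinearEquiv.ofLinear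
      (LinearMap.codRestrict _ (D.subtype.comp (Submodule.subtype _)) ?_)
      (LinearMap.codRestrict _ (LinearMap.codRestrict D (Submodule.subtype _) ?_) ?_) ?_ ?_,
      trivial⟩
    · rintro ⟨⟨x, hx⟩, hx2⟩; exact LinearMap.mem_ker.2 ((mem _).1 hx2)
    · rintro ⟨x, hx⟩
      have hx' : f x = 0 := hx
      simp only [hD, LinearMap.mem_ker, hf₁, LinearMap.coe_comp, Function.comp_apply,
        Submodule.coe_subtype, hx']
      rfl
    · rintro ⟨x, hx⟩; rw [mem]; exact LinearMap.mem_ker.1 hx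
    · apply LinearMap.ext; rintro ⟨x, hx⟩; exact Subtype.ext rfl
    · apply LinearMap.ext; rintro ⟨⟨x, hx⟩, hx2⟩; exact Subtype.ext (Subtype.ext rfl)
  obtain ⟨e2, -⟩ := kk
  haveI := hk; haveI := hQ
  haveI : Module.Projective Λ (LinearMap.ker π) := Module.Projective.of_equiv e2.symm
  haveI : Module.Projective Λ D := Module.Projective.of_equiv e.symm
  exact ⟨P, _, _, f₁, hP, hs₁, inferInstance⟩
end PD1


section Iface
variable {N : Type u} [AddCommGroup N] [Module Λ N]

theorem pdLE_one_iff : pdLE Λ 1 (ModuleCat.of Λ N) ↔ PD1 Λ N := by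
  constructor
  · rintro ⟨P, f, hP, hs, hk⟩
    exact ⟨P, inferInstance, inferInstance, f, hP, hs, hk⟩
  · rintro ⟨P, _, _, f, hP, hs, hk⟩
    exact ⟨ModuleCat.of Λ P, f, hP, hs, hk⟩

theorem pdLE_two_syzygy (h : pdLE Λ 2 (ModuleCat.of Λ N)) :
    ∃ (P : Type u) (_ : AddCommGroup P) (_ : Module Λ P) (f : P →ₗ[Λ] N),
      Module.Projective Λ P ∧ Function.Surjective f ∧ PD1 Λ (LinearMap.ker f) := by
  obtain ⟨P, f, hP, hs, hk⟩ := h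
  exact ⟨P, inferInstance, inferInstance, f, hP, hs, (pdLE_one_iff).1 hk⟩
end Iface


section MoreProj
variable {F Q N P : Type u} [AddCommGroup F] [Module Λ F] [AddCommGroup Q] [Module Λ Q]
  [AddCommGroup N] [Module Λ N] [AddCommGroup P] [Module Λ P]

theorem projective_pi {ι : Type*} [Fintype ι] [DecidableEq ι] (A : ι → Type*)
    [∀ i, AddCommGroup (A i)] [∀ i, Module Λ (A i)] [∀ i, Module.Projective Λ (A i)] :
    Module.Projective Λ (∀ i, A i) := by
  apply Module.Projective.of_lifting_property''
  intro f hf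
  choose g hg using fun i => Module.projective_lifting_property f (LinearMap.single Λ A i) hf
  refine ⟨∑ i, (g i).comp (LinearMap.proj i), ?_⟩
  apply LinearMap.ext; intro x
  have hg' : ∀ i, f ((g i) (x i)) = Pi.single i (x i) :=
    fun i => congrArg (· (x i)) (congrArg DFunLike.coe (hg i))
  simp only [LinearMap.coe_comp, Function.comp_apply, LinearMap.sum_apply, map_sum,
    LinearMap.proj_apply, LinearMap.id_apply]
  rw [Finset.sum_congr rfl (fun i _ => hg' i)]
  exact Finset.univ_sum_single x

/-- If the kernels of two composable surjection-parts are projective, so is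
the kernel of the composite (when the second kernel is projective it splits off). -/
theorem projective_ker_comp (q : F →ₗ[Λ] Q) (w : Q →ₗ[Λ] N) (hq : Function.Surjective q)
    (hkq : Module.Projective Λ (LinearMap.ker q))
    (hkw : Module.Projective Λ (LinearMap.ker w)) :
    Module.Projective Λ (LinearMap.ker (w.comp q)) := by
  set D := LinearMap.ker (w.comp q) with hDdef
  set π : D →ₗ[Λ] (LinearMap.ker w) :=
    LinearMap.codRestrict _ (q.comp D.subtype) (fun x => LinearMap.mem_ker.2 x.2) with hπdef
  have hπs : Function.Surjective π := by
    rintro ⟨k, hk⟩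
    obtain ⟨x, hx⟩ := hq k
    have hxD : x ∈ D := by
      rw [LinearMap.mem_ker, LinearMap.comp_apply, hx]
      exact LinearMap.mem_ker.1 hk
    exact ⟨⟨x, hxD⟩, Subtype.ext hx⟩
  have hle : LinearMap.ker q ≤ D := by
    intro x hx
    rw [LinearMap.mem_ker, LinearMap.comp_apply, LinearMap.mem_ker.1 hx, map_zero]
  have hkerπ : LinearMap.ker π = Submodule.comap D.subtype (LinearMap.ker q) := by
    ext x
    constructor
    · intro hx
      have : (π x : Q) = 0 := by rw [LinearMap.mem_ker.1 hx]; rfl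
      exact Submodule.mem_comap.2 (LinearMap.mem_ker.2 this)
    · intro hx
      have : q (D.subtype x) = 0 := LinearMap.mem_ker.1 (Submodule.mem_comap.1 hx)
      exact LinearMap.mem_ker.2 (Subtype.ext this)
  have e2 : (LinearMap.ker π) ≃ₗ[Λ] (LinearMap.ker q) :=
    (LinearEquiv.ofEq _ _ hkerπ).trans (Submodule.comapSubtypeEquivOfLe hle)
  obtain ⟨e, -⟩ := splitEquiv_s10 π hπs hkw
  haveI := hkq; haveI := hkw
  haveI : Module.Projective Λ (LinearMap.ker π) := Module.Projective.of_equiv e2.symm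
  exact Module.Projective.of_equiv e.symm

/-- A finitely generated module that embeds into a projective module embeds into a
finitely generated free module. -/
theorem embed_fin_free [Module.Finite Λ N] (i : N →ₗ[Λ] P) (hi : Function.Injective i)
    (hP : Module.Projective Λ P) :
    ∃ (m : ℕ) (ψ : N →ₗ[Λ] (Fin m → Λ)), Function.Injective ψ := by
  classical
  obtain ⟨s, hs⟩ := Module.projective_def.1 hP
  have hsinj : Function.Injective s := Function.LeftInverse.injective hs
  set g : N →ₗ[Λ] (P →₀ Λ) := s.comp i with hg
  have hginj : Function.Injective g := hsinj.comp hi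
  obtain ⟨t, ht⟩ := Module.Finite.fg_top (R := Λ) (M := N)
  set T : Finset P := t.sup (fun x => (g x).support) with hT
  have hrange : ∀ y : N, g y ∈ Finsupp.supported Λ Λ (↑T : Set P) := by
    have hsub : (⊤ : Submodule Λ N) ≤ Submodule.comap g (Finsupp.supported Λ Λ (↑T : Set P)) := by
      rw [← ht, Submodule.span_le]
      intro x hx
      simp only [SetLike.mem_coe, Submodule.mem_comap]
      exact (Finsupp.mem_supported Λ (g x)).2 (Finset.coe_subset.2 (Finset.le_sup (f := fun x => (g x).support) hx))
    exact fun y => Submodule.mem_comap.1 (hsub Submodule.mem_top)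
  set ψ1 : N →ₗ[Λ] (Finsupp.supported Λ Λ (↑T : Set P)) :=
    LinearMap.codRestrict _ g hrange with hψ1
  have hψ1inj : Function.Injective ψ1 := by
    intro a b hab
    exact hginj (congrArg Subtype.val hab)
  set e1 := Finsupp.supportedEquivFinsupp (M := Λ) (R := Λ) (↑T : Set P)
  set e2 := Finsupp.linearEquivFunOnFinite Λ Λ ((↑T : Set P))
  set e3 := LinearEquiv.funCongrLeft Λ Λ (T.equivFin.symm : Fin T.card ≃ ((↑T : Set P)))
  refine ⟨T.card, e3.toLinearMap.comp (e2.toLinearMap.comp (e1.toLinearMap.comp ψ1)), ?_⟩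
  exact e3.injective.comp (e2.injective.comp (e1.injective.comp hψ1inj))

/-- Over a ring of global dimension at most 2, a finitely generated module embedding
into a projective module has projective dimension at most 1. -/
theorem pd1_of_embed (hgl : gldimLE Λ 2) [Module.Finite Λ N] (i : N →ₗ[Λ] P)
    (hi : Function.Injective i) (hP : Module.Projective Λ P) : PD1 Λ N := by
  obtain ⟨m, ψ, hψ⟩ := embed_fin_free i hi hP
  set F := (Fin m → Λ) with hF
  set Q := LinearMap.range ψ with hQ
  have eN : N ≃ₗ[Λ] Q := LinearEquiv.ofInjective ψ hψ
  haveI : Module.Finite Λ (F ⧸ Q) := Module.Finite.quotient Λ _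
  have h2 := hgl (ModuleCat.of Λ (F ⧸ Q)) (inferInstance : Module.Finite Λ (F ⧸ Q))
  obtain ⟨P₀, _, _, f₀, hP₀, hs₀, hk₀⟩ := pdLE_two_syzygy h2
  obtain ⟨e, -⟩ := schanuel_s10 Q.mkQ f₀ (Submodule.mkQ_surjective Q) hs₀ inferInstance hP₀
  have hPD : PD1 Λ (LinearMap.ker f₀ × F) := PD1.prod hk₀ inferInstance
  have hPD2 : PD1 Λ (LinearMap.ker Q.mkQ × P₀) := PD1.of_equiv e.symm hPD
  have hPD3 : PD1 Λ (LinearMap.ker Q.mkQ) := PD1.of_prod hPD2 hP₀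
  have hkm : LinearMap.ker Q.mkQ = Q := Submodule.ker_mkQ Q
  exact PD1.of_equiv ((LinearEquiv.ofEq _ _ hkm).trans eN.symm) hPD3

/-- Over a Noetherian ring of global dimension at most 2, a submodule of a f.g. module of
projective dimension at most 1 has projective dimension at most 1. -/
theorem pd1_submodule (hgl : gldimLE Λ 2) [IsNoetherianRing Λ] {M : Type u} [AddCommGroup M]
    [Module Λ M] [Module.Finite Λ M] (hM : PD1 Λ M) (N : Submodule Λ M) : PD1 Λ N := by
  obtain ⟨n, p, hp⟩ := Module.Finite.exists_fin' Λ M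
  have hK : Module.Projective Λ (LinearMap.ker p) := hM.ker_projective p hp inferInstance
  set Qp := Submodule.comap p N with hQp
  set p' : Qp →ₗ[Λ] N := p.restrict (fun x hx => hx) with hp'def
  have hp's : Function.Surjective p' := by
    rintro ⟨y, hy⟩
    obtain ⟨x, hx⟩ := hp y
    refine ⟨⟨x, show p x ∈ N from hx ▸ hy⟩, Subtype.ext hx⟩
  haveI : Module.Finite Λ Qp := Module.Finite.iff_fg.2 (IsNoetherian.noetherian Qp)
  have hPDQp : PD1 Λ Qp := pd1_of_embed hgl Qp.subtype (Submodule.injective_subtype Qp)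
    inferInstance
  obtain ⟨m, q, hq⟩ := Module.Finite.exists_fin' Λ Qp
  have hkq : Module.Projective Λ (LinearMap.ker q) := hPDQp.ker_projective q hq inferInstance
  -- kernel of p' is projective, since it is (equivalent to) ker p
  have hlek : LinearMap.ker p ≤ Qp := fun x hx => by
    rw [hQp, Submodule.mem_comap, LinearMap.mem_ker.1 hx]; exact N.zero_mem
  have hkerp' : LinearMap.ker p' = Submodule.comap Qp.subtype (LinearMap.ker p) := by
    ext x
    constructor
    · intro hx
      have : (p' x : M) = 0 := by rw [LinearMap.mem_ker.1 hx]; rfl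
      exact Submodule.mem_comap.2 (LinearMap.mem_ker.2 this)
    · intro hx
      exact LinearMap.mem_ker.2 (Subtype.ext (LinearMap.mem_ker.1 (Submodule.mem_comap.1 hx)))
  have hkp' : Module.Projective Λ (LinearMap.ker p') := by
    haveI := hK
    exact Module.Projective.of_equiv
      ((LinearEquiv.ofEq _ _ hkerp').trans (Submodule.comapSubtypeEquivOfLe hlek)).symm
  have : Module.Projective Λ (LinearMap.ker (p'.comp q)) :=
    projective_ker_comp q p' hq hkq hkp'
  exact ⟨Fin m → Λ, _, _, p'.comp q, inferInstance, hp's.comp hq, this⟩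

end MoreProj


section Crux
variable {I₀ I₁ S : Type u} [AddCommGroup I₀] [Module Λ I₀] [AddCommGroup I₁] [Module Λ I₁]
  [AddCommGroup S] [Module Λ S]

/-- Over a Noetherian ring of global dimension ≤ 2 with dominant dimension ≥ 2 data,
a simple module of projective dimension ≤ 1 embeds into `I₀`. -/
theorem simple_embeds (hgl : gldimLE Λ 2) [IsNoetherianRing Λ]
    (hI₀inj : Module.Injective Λ I₀) (hI₁proj : Module.Projective Λ I₁)
    (fI : Λ →ₗ[Λ] I₀) (hfI : Function.Injective fI) (g : I₀ →ₗ[Λ] I₁)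
    (hker : LinearMap.ker g = LinearMap.range fI)
    (hS : IsSimpleModule Λ S) (hPD : PD1 Λ S) :
    ∃ ψ : S →ₗ[Λ] I₀, Function.Injective ψ := by
  haveI := hS
  haveI : Nontrivial S := IsSimpleModule.nontrivial Λ S
  by_contra hno'
  push_neg at hno'
  have hinj_of_ne : ∀ {V : Type u} [AddCommGroup V] [Module Λ V] (φ : S →ₗ[Λ] V),
      φ ≠ 0 → Function.Injective φ := by
    intro V _ _ φ hφ
    rcases eq_bot_or_eq_top (LinearMap.ker φ) with hb | ht
    · exact LinearMap.ker_eq_bot.1 hb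
    · exact absurd (LinearMap.ker_eq_top.1 ht) hφ
  have hno : ∀ ψ : S →ₗ[Λ] I₀, ψ = 0 := by
    intro ψ
    by_contra h
    exact hno' ψ (hinj_of_ne ψ h)
  obtain ⟨x₀, hx₀⟩ := exists_ne (0 : S)
  have hps : Function.Surjective (LinearMap.toSpanSingleton Λ S x₀) :=
    IsSimpleModule.toSpanSingleton_surjective Λ hx₀
  set p : Λ →ₗ[Λ] S := LinearMap.toSpanSingleton Λ S x₀ with hpdef
  haveI : Module.Finite Λ S := Module.Finite.of_surjective p hps
  -- no nonzero homomorphisms from S into any projective module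
  have hnoP : ∀ (V : Type u) [AddCommGroup V] [Module Λ V],
      Module.Projective Λ V → ∀ φ : S →ₗ[Λ] V, φ = 0 := by
    intro V _ _ hV φ
    by_contra hφ
    have hφinj := hinj_of_ne φ hφ
    obtain ⟨m, ρ, hρ⟩ := embed_fin_free φ hφinj hV
    set Φ : S →ₗ[Λ] (Fin m → I₀) := (fI.compLeft (Fin m)).comp ρ with hΦdef
    have hΦ0 : Φ = 0 := by
      apply LinearMap.ext; intro x
      funext i
      have h1 : (LinearMap.proj i).comp Φ = 0 := hno _
      have h2 : Φ x i = ((LinearMap.proj (R := Λ) (φ := fun _ : Fin m => I₀) i).comp Φ) x := rfl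
      rw [h2, h1]; rfl
    have hΦinj : Function.Injective Φ := by
      have hcl : Function.Injective (fI.compLeft (Fin m)) := by
        intro a b hab; funext i; exact hfI (congrFun hab i)
      exact hcl.comp hρ
    obtain ⟨x, hx⟩ := exists_ne (0 : S)
    exact hx (hΦinj (by rw [hΦ0]; simp))
  set K := LinearMap.ker p with hKdef
  have hKproj : Module.Projective Λ K := hPD.ker_projective p hps inferInstance
  haveI : Module.Finite Λ K := Module.Finite.iff_fg.2 (IsNoetherian.noetherian K)
  haveI := hKproj
  obtain ⟨n, π, σ, hπs, hσinj, hπσ⟩ := Module.Finite.exists_comp_eq_id_of_projective Λ K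
  have hπσ' : ∀ y : K, π (σ y) = y := fun y => congrArg (· y) (congrArg DFunLike.coe hπσ)
  set j : K →ₗ[Λ] (Fin n → I₀) := (fI.compLeft (Fin n)).comp σ with hjdef
  have hjinj : Function.Injective j := by
    intro a b hab
    apply hσinj; funext i; exact hfI (congrFun hab i)
  choose hcomp hhcomp using fun i : Fin n =>
    hI₀inj.out K.subtype (Submodule.injective_subtype K) ((LinearMap.proj i).comp j)
  set h : Λ →ₗ[Λ] (Fin n → I₀) := LinearMap.pi hcomp with hhdef
  have hhK : ∀ x : K, h (x : Λ) = j x := by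
    intro x; funext i; exact hhcomp i x
  -- h is injective
  have hhinj : Function.Injective h := by
    rw [← LinearMap.ker_eq_bot]
    by_contra hne
    have hdisj : ∀ x : Λ, x ∈ LinearMap.ker h → x ∈ K → x = 0 := by
      intro x hx hxK
      have h1 : j ⟨x, hxK⟩ = 0 := by rw [← hhK ⟨x, hxK⟩]; exact LinearMap.mem_ker.1 hx
      have h2 : (⟨x, hxK⟩ : K) = 0 := hjinj (by rw [h1]; simp)
      exact congrArg Subtype.val h2
    set pk : (LinearMap.ker h) →ₗ[Λ] S := p.comp (LinearMap.ker h).subtype with hpkdef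
    have hpkinj : Function.Injective pk := by
      intro a b hab
      apply Subtype.ext
      have hsub : ((a : Λ) - b) ∈ K := by
        rw [hKdef, LinearMap.mem_ker, map_sub, sub_eq_zero]; exact hab
      have hsub2 : ((a : Λ) - b) ∈ LinearMap.ker h := sub_mem a.2 b.2
      have := hdisj _ hsub2 hsub
      exact sub_eq_zero.1 this
    obtain ⟨x, hxmem, hxne⟩ := (Submodule.ne_bot_iff _).1 hne
    have hpkne : pk ≠ 0 := by
      intro h0
      apply hxne
      have : pk ⟨x, hxmem⟩ = pk 0 := by rw [h0]; simp
      exact congrArg Subtype.val (hpkinj this)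
    have hrt : LinearMap.range pk = ⊤ := by
      rcases eq_bot_or_eq_top (LinearMap.range pk) with hb | ht
      · exact absurd (LinearMap.range_eq_bot.1 hb) hpkne
      · exact ht
    set epk := LinearEquiv.ofBijective pk ⟨hpkinj, LinearMap.range_eq_top.1 hrt⟩
    have := hnoP Λ inferInstance ((LinearMap.ker h).subtype.comp epk.symm.toLinearMap)
    have hinj2 : Function.Injective ((LinearMap.ker h).subtype.comp epk.symm.toLinearMap) :=
      (Submodule.injective_subtype _).comp epk.symm.injective
    obtain ⟨y, hy⟩ := exists_ne (0 : S)
    apply hy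
    apply hinj2
    rw [this]; simp
  -- the composite with g kills K, hence factors through S, hence vanishes
  have hfactor : ∀ (V : Type u) [AddCommGroup V] [Module Λ V] (w : Λ →ₗ[Λ] V),
      K ≤ LinearMap.ker w → ∃ φ : S →ₗ[Λ] V, φ.comp p = w := by
    intro V _ _ w hw
    set e := p.quotKerEquivOfSurjective hps with hedef
    refine ⟨(K.liftQ w hw).comp e.symm.toLinearMap, ?_⟩
    apply LinearMap.ext; intro x
    have h1 : e.symm (p x) = K.mkQ x := by
      apply e.injective
      rw [e.apply_symm_apply]
      rfl
    show (K.liftQ w hw) (e.symm (p x)) = w x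
    rw [h1]
    exact Submodule.liftQ_apply K w x
  set G : Λ →ₗ[Λ] (Fin n → I₁) := (g.compLeft (Fin n)).comp h with hGdef
  have hGK : K ≤ LinearMap.ker G := by
    intro x hxK
    rw [LinearMap.mem_ker]
    have : h x = j ⟨x, hxK⟩ := hhK ⟨x, hxK⟩
    funext i
    show g (h x i) = 0
    rw [this]
    show g (fI (σ ⟨x, hxK⟩ i)) = 0
    have : fI (σ ⟨x, hxK⟩ i) ∈ LinearMap.ker g := by
      rw [hker]; exact LinearMap.mem_range_self _ _
    exact LinearMap.mem_ker.1 this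
  obtain ⟨φG, hφG⟩ := hfactor _ G hGK
  haveI := hI₁proj
  have hφG0 : φG = 0 := by
    classical
    exact hnoP _ (projective_pi (fun _ : Fin n => I₁)) φG
  have hG0 : G = 0 := by rw [← hφG, hφG0, LinearMap.zero_comp]
  have hrangeh : ∀ (x : Λ) (i : Fin n), h x i ∈ LinearMap.range fI := by
    intro x i
    rw [← hker, LinearMap.mem_ker]
    have : G x = 0 := by rw [hG0]; rfl
    exact congrFun this i
  set eI := LinearEquiv.ofInjective fI hfI with heIdef
  have heI : ∀ z : LinearMap.range fI, fI (eI.symm z) = (z : I₀) := by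
    intro z
    conv_rhs => rw [← eI.apply_symm_apply z]
    rfl
  set h' : Λ →ₗ[Λ] (Fin n → Λ) := LinearMap.pi (fun i =>
    eI.symm.toLinearMap.comp (LinearMap.codRestrict (LinearMap.range fI)
      ((LinearMap.proj i).comp h) (fun x => hrangeh x i))) with hh'def
  have hfh' : ∀ (x : Λ) (i : Fin n), fI (h' x i) = h x i := by
    intro x i
    exact heI ⟨h x i, hrangeh x i⟩
  have hh'inj : Function.Injective h' := by
    intro a b hab
    apply hhinj
    funext i
    rw [← hfh' a i, ← hfh' b i, hab]
  have hh'K : ∀ x : K, h' (x : Λ) = σ x := by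
    intro x
    funext i
    apply hfI
    rw [hfh']
    rw [hhK]
    rfl
  set v : Λ →ₗ[Λ] (Fin n → Λ) := h' - (σ.comp (π.comp h')) with hvdef
  have hvK : K ≤ LinearMap.ker v := by
    intro x hxK
    rw [LinearMap.mem_ker]
    show h' x - σ (π (h' x)) = 0
    have h1 : h' x = σ ⟨x, hxK⟩ := hh'K ⟨x, hxK⟩
    rw [h1, hπσ', sub_self]
  obtain ⟨φv, hφv⟩ := hfactor _ v hvK
  have hφv0 : φv = 0 := hnoP _ inferInstance φv
  have hv0 : v = 0 := by rw [← hφv, hφv0, LinearMap.zero_comp]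
  have hKtop : ∀ x : Λ, x ∈ K := by
    intro x
    have h1 : h' x - σ (π (h' x)) = 0 := by
      have : v x = 0 := by rw [hv0]; rfl
      exact this
    have h2 : h' x = σ (π (h' x)) := by rwa [sub_eq_zero] at h1
    have h3 : h' ((π (h' x) : K) : Λ) = σ (π (h' x)) := hh'K _
    have h4 : x = ((π (h' x) : K) : Λ) := hh'inj (h2.trans h3.symm)
    rw [h4]
    exact (π (h' x)).2
  obtain ⟨y, hy⟩ := hps x₀
  exact hx₀ (by rw [← hy]; exact LinearMap.mem_ker.1 (hKtop y))

end Crux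


section EmbedPower
variable {I₀ : Type u} [AddCommGroup I₀] [Module Λ I₀]

/-- Over an Artinian module, if every simple submodule embeds into an injective module `I₀`,
then every submodule embeds into a finite power of `I₀`. -/
theorem embed_power (hI₀inj : Module.Injective Λ I₀) {M : Type u} [AddCommGroup M] [Module Λ M]
    [IsArtinian Λ M]
    (hsimple : ∀ S : Submodule Λ M, IsSimpleModule Λ S → ∃ ψ : S →ₗ[Λ] I₀, Function.Injective ψ)
    (N : Submodule Λ M) :
    ∃ (r : ℕ) (φ : N →ₗ[Λ] (Fin r → I₀)), Function.Injective φ := by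
  have wf : WellFounded ((· < ·) : Submodule Λ M → Submodule Λ M → Prop) :=
    (isArtinian_iff Λ M).1 inferInstance
  induction N using WellFounded.induction wf with
  | _ N IH =>
  by_cases hbot : N = ⊥
  · refine ⟨0, 0, ?_⟩
    intro a b _
    apply Subtype.ext
    have ha : (a : M) ∈ (⊥ : Submodule Λ M) := hbot ▸ a.2
    have hb : (b : M) ∈ (⊥ : Submodule Λ M) := hbot ▸ b.2
    rw [Submodule.mem_bot] at ha hb
    rw [ha, hb]
  · have hne : {P : Submodule Λ M | ⊥ < P ∧ P ≤ N}.Nonempty :=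
      ⟨N, bot_lt_iff_ne_bot.2 hbot, le_rfl⟩
    obtain ⟨S, ⟨hSbot, hSle⟩, hmin⟩ := wf.has_min _ hne
    have hatom : IsAtom S := by
      refine ⟨bot_lt_iff_ne_bot.1 hSbot, ?_⟩
      intro b hb
      by_contra hb0
      exact hmin b ⟨bot_lt_iff_ne_bot.2 hb0, hb.le.trans hSle⟩ hb
    have hSsimple : IsSimpleModule Λ S := isSimpleModule_iff_isAtom.2 hatom
    obtain ⟨ψ, hψ⟩ := hsimple S hSsimple
    obtain ⟨h₁, hh₁⟩ := hI₀inj.out S.subtype (Submodule.injective_subtype S) ψ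
    set N' := N ⊓ LinearMap.ker h₁ with hN'def
    have hN'lt : N' < N := by
      refine lt_of_le_of_ne inf_le_left ?_
      intro heq
      obtain ⟨x, hxS, hxne⟩ := (Submodule.ne_bot_iff S).1 (bot_lt_iff_ne_bot.1 hSbot)
      have hxN : x ∈ N := hSle hxS
      have hxk : x ∈ LinearMap.ker h₁ := by
        rw [← heq] at hxN; exact hxN.2
      have : h₁ x = ψ ⟨x, hxS⟩ := hh₁ ⟨x, hxS⟩
      have hz : ψ ⟨x, hxS⟩ = 0 := by rw [← this]; exact LinearMap.mem_ker.1 hxk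
      have : (⟨x, hxS⟩ : S) = 0 := hψ (by rw [hz]; simp)
      exact hxne (congrArg Subtype.val this)
    obtain ⟨r, φ, hφ⟩ := IH N' hN'lt
    choose Φc hΦc using fun i : Fin r =>
      hI₀inj.out N'.subtype (Submodule.injective_subtype N') ((LinearMap.proj i).comp φ)
    set Φ : M →ₗ[Λ] (Fin r → I₀) := LinearMap.pi Φc with hΦdef
    refine ⟨r + 1, LinearMap.pi (fun i => Fin.cases (motive := fun _ => (↥N →ₗ[Λ] I₀)) (h₁.comp N.subtype)
      (fun i' => (LinearMap.proj i').comp (Φ.comp N.subtype)) i), ?_⟩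
    have key : ∀ x : N, (LinearMap.pi (fun i => Fin.cases (motive := fun _ => (↥N →ₗ[Λ] I₀)) (h₁.comp N.subtype)
        (fun i' => (LinearMap.proj i').comp (Φ.comp N.subtype)) i)) x = 0 → x = 0 := by
      intro x hx0
      have h0 : h₁ (x : M) = 0 := by
        have := congrFun hx0 (0 : Fin (r + 1))
        simpa using this
      have hΦ0 : ∀ i : Fin r, Φ (x : M) i = 0 := by
        intro i
        have := congrFun hx0 i.succ
        simpa using this
      have hxN' : (x : M) ∈ N' := ⟨x.2, LinearMap.mem_ker.2 h0⟩
      have hφx : φ ⟨(x : M), hxN'⟩ = 0 := by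
        funext i
        have := hΦc i ⟨(x : M), hxN'⟩
        have h2 : Φ (x : M) i = φ ⟨(x : M), hxN'⟩ i := this
        rw [← h2]; exact hΦ0 i
      have h5 : (⟨(x : M), hxN'⟩ : N') = 0 := hφ (by rw [hφx]; simp)
      have hval : (x : M) = 0 := congrArg Subtype.val h5
      exact Subtype.ext hval
    intro a b hab
    have : a - b = 0 := key (a - b) (by rw [map_sub, hab, sub_self])
    exact sub_eq_zero.1 this

end EmbedPower

section Glue

theorem pdLE_succ (n : ℕ) (X : ModuleCat.{u} Λ) (h : pdLE Λ n X) : pdLE Λ (n + 1) X := by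
  induction n generalizing X with
  | zero =>
    refine ⟨X, LinearMap.id, h, Function.surjective_id, ?_⟩
    haveI : Subsingleton (LinearMap.ker (LinearMap.id : X →ₗ[Λ] X)) :=
      ⟨fun a b => Subtype.ext ((LinearMap.mem_ker.1 a.2).trans (LinearMap.mem_ker.1 b.2).symm)⟩
    show Module.Projective Λ (LinearMap.ker (LinearMap.id : X →ₗ[Λ] X))
    exact Subsing.proj _
  | succ n IH =>
    obtain ⟨P, f, hP, hs, hk⟩ := h
    exact ⟨P, f, hP, hs, IH _ hk⟩

theorem projDim_eq_two_iff {X : ModuleCat.{u} Λ} (h2 : pdLE Λ 2 X) :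
    projDim Λ X = 2 ↔ ¬ pdLE Λ 1 X := by
  unfold projDim
  constructor
  · intro h hpd1
    have hle : sInf ((↑) '' {n : ℕ | pdLE Λ n X}) ≤ ((1 : ℕ) : ℕ∞) :=
      sInf_le ⟨1, hpd1, rfl⟩
    rw [h] at hle
    norm_num at hle
  · intro h1
    apply le_antisymm
    · exact sInf_le ⟨2, h2, rfl⟩
    · apply le_sInf
      rintro b ⟨n, hn, rfl⟩
      match n, hn with
      | 0, hn => exact absurd (pdLE_succ 0 X hn) h1
      | 1, hn => exact absurd hn h1
      | (m + 2), hn => exact_mod_cast Nat.le_add_left 2 m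

end Glue

end Helpers

/-- Over a finite dimensional Auslander algebra, a nonzero finitely generated module has
projective dimension exactly `2` iff its socle does. -/
theorem stmt_10 (k Λ : Type u) [Field k] [Ring Λ] [Algebra k Λ] [FiniteDimensional k Λ]
    (hΛ : IsAuslander Λ)
    (M : Type u) [AddCommGroup M] [Module Λ M] [Module.Finite Λ M] [Nontrivial M] :
    projDim Λ (ModuleCat.of Λ M) = 2 ↔ projDim Λ (ModuleCat.of Λ ↥(socle Λ M)) = 2 := by
  obtain ⟨hgl, I₀M, I₁M, fI, g, hI₀inj, hI₀proj, hI₁inj, hI₁proj, hfI, hker⟩ := hΛ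
  haveI : IsNoetherianRing Λ := isNoetherianRing_iff.mpr
    (isNoetherian_of_tower k (inferInstance : IsNoetherian k Λ))
  haveI : IsArtinianRing Λ := IsArtinianRing.of_finite k Λ
  haveI : Module.Finite Λ ↥(socle Λ M) :=
    Module.Finite.iff_fg.2 (IsNoetherian.noetherian (socle Λ M))
  have h2M : pdLE Λ 2 (ModuleCat.of Λ M) :=
    hgl (ModuleCat.of Λ M) (inferInstance : Module.Finite Λ M)
  have h2s : pdLE Λ 2 (ModuleCat.of Λ ↥(socle Λ M)) :=
    hgl (ModuleCat.of Λ ↥(socle Λ M)) (inferInstance : Module.Finite Λ ↥(socle Λ M))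
  rw [projDim_eq_two_iff h2M, projDim_eq_two_iff h2s]
  have key : PD1 Λ M ↔ PD1 Λ ↥(socle Λ M) := by
    constructor
    · intro h
      exact pd1_submodule hgl h (socle Λ M)
    · intro hsoc
      haveI : IsArtinian Λ M := isArtinian_of_fg_of_artinian'
      have hsimple : ∀ S : Submodule Λ M, IsSimpleModule Λ S →
          ∃ ψ : S →ₗ[Λ] ↥I₀M, Function.Injective ψ := by
        intro S hSsimp
        have hle : S ≤ socle Λ M := le_sSup hSsimp
        have hPD1 : PD1 Λ ↥S := PD1.of_equiv (Submodule.comapSubtypeEquivOfLe hle)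
          (pd1_submodule hgl hsoc _)
        exact simple_embeds hgl hI₀inj hI₁proj fI hfI g hker hSsimp hPD1
      obtain ⟨r, φ, hφ⟩ := embed_power hI₀inj hsimple ⊤
      classical
      haveI := hI₀proj
      have hproj : Module.Projective Λ (Fin r → ↥I₀M) := projective_pi _
      have hPD1M : PD1 Λ M := pd1_of_embed hgl
        (φ.comp (Submodule.topEquiv (R := Λ) (M := M)).symm.toLinearMap)
        (hφ.comp (LinearEquiv.injective _)) hproj
      exact hPD1M
  constructor
  · intro h hp1
    exact h (pdLE_one_iff.2 (key.2 (pdLE_one_iff.1 hp1)))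
  · intro h hp1
    exact h (pdLE_one_iff.2 (key.1 (pdLE_one_iff.1 hp1)))
end
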